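/- If sequences x^n → x* and y^n satisfy ‖x^n − y^n‖_H = o(‖x^n − x*‖_H) and ‖y^{ν+1} − x*‖_H ≤ ρ ‖y^ν − x*‖_H for some ρ ∈ (0,1) for all large ν, then limsup_{ν→∞} ‖x^{ν+1} − x*‖_H / ‖x^ν − x*‖_H ≤ ρ (assuming x^ν ≠ x* for all ν). -/

import Mathlib

open Matrix Filter

/-- if `xⁿ → x*`, `‖xⁿ - yⁿ‖_H = o(‖xⁿ - x*‖_H)`, and eventually
`‖yν₊₁ - x*‖_H ≤ ρ ‖yν - x*‖_H` for some `ρ ∈ (0,1)`, then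
`limsup ‖xν₊₁ - x*‖_H / ‖xν - x*‖_H ≤ ρ` (assuming `xν ≠ x*` for all `ν`). -/
theorem rate_transfer {n : ℕ} (H : Matrix (Fin n) (Fin n) ℝ) (hH : H.PosDef)
    (normH : (Fin n → ℝ) → ℝ)
    (hnormH : ∀ v, normH v = Real.sqrt (v ⬝ᵥ H.mulVec v))
    (x y : ℕ → (Fin n → ℝ)) (xstar : Fin n → ℝ) (ρ : ℝ)
    (hρ : ρ ∈ Set.Ioo (0 : ℝ) 1)
    (hlim : Tendsto x atTop (nhds xstar))
    (hne : ∀ ν, x ν ≠ xstar)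
    (ho : Tendsto (fun ν => normH (x ν - y ν) / normH (x ν - xstar)) atTop (nhds 0))
    (hcontract : ∀ᶠ ν in atTop, normH (y (ν + 1) - xstar) ≤ ρ * normH (y ν - xstar)) :
    limsup (fun ν => normH (x (ν + 1) - xstar) / normH (x ν - xstar)) atTop ≤ ρ := by
  letI NG : NormedAddCommGroup (Fin n → ℝ) := Matrix.toNormedAddCommGroup H hH
  letI SG : SeminormedAddGroup (Fin n → ℝ) :=
    (@NormedAddCommGroup.toSeminormedAddCommGroup _ NG).toSeminormedAddGroup
  have hkey : ∀ v, normH v = @norm _ NG.toNorm v := fun v => (hnormH v).trans (by rw [dotProduct_comm]; rfl)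
  have hpos : ∀ ν, 0 < normH (x ν - xstar) := by
    intro ν
    rw [hkey]
    exact (@norm_pos_iff _ (@NormedAddCommGroup.toNormedAddGroup _ NG) (x ν - xstar)).mpr
      (sub_ne_zero.mpr (hne ν))
  have htri : ∀ u v : Fin n → ℝ, normH (u + v) ≤ normH u + normH v := by
    intro u v; simp only [hkey]; exact @norm_add_le _ SG u v
  have hnonneg : ∀ v, 0 ≤ normH v := by
    intro v; rw [hkey]; exact @norm_nonneg _ SG v
  have hneg : ∀ v : Fin n → ℝ, normH (-v) = normH v := by
    intro v; simp only [hkey]; exact @norm_neg _ SG v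
  set a : ℕ → ℝ := fun ν => normH (x ν - xstar) with ha
  set ε : ℕ → ℝ := fun ν => normH (x ν - y ν) / a ν with hε
  have hb : ∀ ν, normH (x ν - y ν) = ε ν * a ν := by
    intro ν; exact (div_mul_cancel₀ _ (hpos ν).ne').symm
  have hεnn : ∀ ν, 0 ≤ ε ν := fun ν => div_nonneg (hnonneg _) (hpos ν).le
  set g : ℕ → ℝ := fun ν => ρ * (1 + ε ν) / (1 - ε (ν + 1)) with hg
  have hε0 : Tendsto ε atTop (nhds 0) := ho
  have hε0' : Tendsto (fun ν => ε (ν + 1)) atTop (nhds 0) :=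
    hε0.comp (tendsto_add_atTop_nat 1)
  have hglim : Tendsto g atTop (nhds ρ) := by
    have : Tendsto (fun ν => ρ * (1 + ε ν) / (1 - ε (ν + 1))) atTop
        (nhds (ρ * (1 + 0) / (1 - 0))) :=
      (tendsto_const_nhds.mul (tendsto_const_nhds.add hε0)).div
        (tendsto_const_nhds.sub hε0') (by norm_num)
    simpa using this
  have hsmall : ∀ᶠ ν in atTop, ε (ν + 1) < 1 :=
    hε0'.eventually (eventually_lt_nhds one_pos)
  have hev : ∀ᶠ ν in atTop, a (ν + 1) / a ν ≤ g ν := by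
    filter_upwards [hcontract, hsmall] with ν hc hs
    have h1 : a (ν + 1) ≤ normH (y (ν + 1) - xstar) + ε (ν + 1) * a (ν + 1) := by
      have heq : (x (ν+1) - y (ν+1)) + (y (ν+1) - xstar) = x (ν+1) - xstar := by abel
      have := htri (x (ν + 1) - y (ν + 1)) (y (ν + 1) - xstar)
      rw [heq, hb] at this
      have haa : normH (x (ν+1) - xstar) = a (ν+1) := rfl
      rw [haa] at this
      linarith
    have h2 : normH (y ν - xstar) ≤ a ν + ε ν * a ν := by
      have heq : (y ν - x ν) + (x ν - xstar) = y ν - xstar := by abel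
      have := htri (y ν - x ν) (x ν - xstar)
      rw [heq] at this
      have hyx : normH (y ν - x ν) = normH (x ν - y ν) := by
        rw [show y ν - x ν = -(x ν - y ν) by abel, hneg]
      rw [hyx, hb] at this
      have haa : normH (x ν - xstar) = a ν := rfl
      rw [haa] at this
      linarith
    have h3 : a (ν + 1) * (1 - ε (ν + 1)) ≤ ρ * (a ν * (1 + ε ν)) := by
      nlinarith [mul_le_mul_of_nonneg_left h2 hρ.1.le, hc, h1]
    rw [hg]
    rw [div_le_div_iff₀ (hpos ν) (by linarith : (0:ℝ) < 1 - ε (ν + 1))]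
    have haa : normH (x ν - xstar) = a ν := rfl
    rw [haa]
    nlinarith [h3]
  have hub : IsBoundedUnder (· ≤ ·) atTop g := hglim.isBoundedUnder_le
  have hcb : IsCoboundedUnder (· ≤ ·) atTop (fun ν => a (ν + 1) / a ν) := by
    apply IsBoundedUnder.isCoboundedUnder_le
    refine ⟨0, eventually_map.mpr ?_⟩
    exact Eventually.of_forall fun ν => div_nonneg (hnonneg _) (hpos ν).le
  calc limsup (fun ν => a (ν + 1) / a ν) atTop ≤ limsup g atTop :=
        limsup_le_limsup hev hcb hub
    _ = ρ := hglim.limsup_eq
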